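/- For any terminal-weighted unambiguous context-free grammar G_π, there exists a rule-weighted grammar G_λ generating the same language such that for every length n ≥ 0 and every word w of length n in the language, the induced probability p_{λ,n}(w) = λ(w)/∑_{u, |u|=n} λ(u) equals p_{π,n}(w) = π(w)/∑_{u, |u|=n} π(u). -/
import Mathlib


namespace WCFG

/-- A context-free grammar: a set of production rules `(A, rhs)` and a start symbol. -/
structure CFG (T N : Type) where
  rules : Set (N × List (T ⊕ N))
  start : N

/-- Parse trees: leaves are terminal letters, internal nodes are labeled by a non-terminal. -/
inductive PT (T N : Type) : Type where
  | leaf (t : T) : PT T N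
  | node (A : N) (children : List (PT T N)) : PT T N

/-- The symbol (terminal or non-terminal) at the root of a parse tree. -/
def PT.sym {T N : Type} : PT T N → T ⊕ N
  | .leaf t => .inl t
  | .node A _ => .inr A

mutual
/-- The yield (produced word) of a parse tree. -/
def PT.yield {T N : Type} : PT T N → List T
  | .leaf t => [t]
  | .node _ cs => PT.yieldF cs
def PT.yieldF {T N : Type} : List (PT T N) → List T
  | [] => []
  | p :: ps => PT.yield p ++ PT.yieldF ps
end

mutual
/-- The weight of a parse tree: product of the weights of the rules used (with multiplicity). -/
def PT.weight {T N : Type} (wt : N × List (T ⊕ N) → ℝ) : PT T N → ℝ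
  | .leaf _ => 1
  | .node A cs => wt (A, cs.map PT.sym) * PT.weightF wt cs
def PT.weightF {T N : Type} (wt : N × List (T ⊕ N) → ℝ) : List (PT T N) → ℝ
  | [] => 1
  | p :: ps => PT.weight wt p * PT.weightF wt ps
end

mutual
/-- Number of occurrences of a rule in a parse tree. -/
def PT.ruleCount {T N : Type} [DecidableEq N] [DecidableEq T]
    (r : N × List (T ⊕ N)) : PT T N → ℕ
  | .leaf _ => 0
  | .node A cs => (if (A, cs.map PT.sym) = r then 1 else 0) + PT.ruleCountF r cs
def PT.ruleCountF {T N : Type} [DecidableEq N] [DecidableEq T]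
    (r : N × List (T ⊕ N)) : List (PT T N) → ℕ
  | [] => 0
  | p :: ps => PT.ruleCount r p + PT.ruleCountF r ps
end

/-- Well-formedness of a parse tree w.r.t. a grammar. -/
inductive PT.wf {T N : Type} (G : CFG T N) : PT T N → Prop
  | leaf (t : T) : (PT.leaf t).wf G
  | node (A : N) (cs : List (PT T N)) (hr : (A, cs.map PT.sym) ∈ G.rules)
      (hc : ∀ c ∈ cs, c.wf G) : (PT.node A cs).wf G

/-- The language generated by a grammar. -/
def CFG.lang {T N : Type} (G : CFG T N) : Set (List T) :=
  {w | ∃ p : PT T N, p.wf G ∧ p.sym = Sum.inr G.start ∧ p.yield = w}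

/-- Unambiguity: any word has at most one parse tree from the axiom. -/
def CFG.Unambiguous {T N : Type} (G : CFG T N) : Prop :=
  ∀ p q : PT T N, p.wf G → q.wf G → p.sym = Sum.inr G.start → q.sym = Sum.inr G.start →
    p.yield = q.yield → p = q

/-- `wDeriv G wt X w c` : the word `w` derives from the sentential form `X`
with total weight `c` (product over all rules used, with multiplicity). -/
def wDeriv {T N : Type} (G : CFG T N) (wt : N × List (T ⊕ N) → ℝ)
    (X : List (T ⊕ N)) (w : List T) (c : ℝ) : Prop :=
  ∃ ps : List (PT T N), (∀ p ∈ ps, p.wf G) ∧ ps.map PT.sym = X ∧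
    PT.yieldF ps = w ∧ (ps.map (PT.weight wt)).prod = c


/-- Leaf factor: π on terminal roots, 1 on nonterminal roots. -/
def lf {T N : Type} (π : T → ℝ) (p : PT T N) : ℝ :=
  Sum.elim π (fun _ => 1) p.sym

/-- The rule weight induced by terminal weights. -/
def rwt {T N : Type} (π : T → ℝ) (r : N × List (T ⊕ N)) : ℝ :=
  (r.2.map (Sum.elim π (fun _ => 1))).prod

mutual
theorem weight_rwt {T N : Type} (π : T → ℝ) :
    ∀ p : PT T N, p.weight (rwt π) * lf π p = (p.yield.map π).prod
  | .leaf t => by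
    simp [PT.weight, PT.yield, lf, PT.sym]
  | .node A cs => by
    have h := weightF_rwt π cs
    simp only [PT.weight, PT.yield, lf, PT.sym, Sum.elim_inr, mul_one, rwt]
    rw [← h]
    have : (cs.map PT.sym).map (Sum.elim π fun _ => 1) = cs.map (lf π) := by
      simp [lf]
    rw [this]
    ring
theorem weightF_rwt {T N : Type} (π : T → ℝ) :
    ∀ ps : List (PT T N),
      PT.weightF (rwt π) ps * (ps.map (lf π)).prod = ((PT.yieldF ps).map π).prod
  | [] => by simp [PT.weightF, PT.yieldF]
  | p :: ps => by
    have h1 := weight_rwt π p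
    have h2 := weightF_rwt π ps
    simp only [PT.weightF, PT.yieldF, List.map_cons, List.map_append, List.prod_cons,
      List.prod_append]
    rw [← h1, ← h2]
    ring
end

/-- For any terminal-weighted unambiguous CFG `G` with positive letter
weights `π`, there is a rule-weighted (unambiguous) grammar `G'` with the same language
whose induced length-`n` probability distribution coincides with the one induced by `π`,
for every `n` and every word of length `n` of the language. -/
theorem terminal_weighted_simulated_by_rule_weighted {T N : Type}
    (G : CFG T N) (hU : G.Unambiguous)
    (π : T → ℝ) (hπ : ∀ t, 0 < π t) :
    ∃ (N' : Type) (G' : CFG T N') (wt : N' × List (T ⊕ N') → ℝ) (lw : List T → ℝ),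
      G'.Unambiguous ∧ (∀ r ∈ G'.rules, 0 < wt r) ∧ G'.lang = G.lang ∧
      (∀ (w : List T) (p : PT T N'), p.wf G' → p.sym = Sum.inr G'.start → p.yield = w →
        p.weight wt = lw w) ∧
      ∀ n : ℕ, ∀ w ∈ G.lang, w.length = n →
        lw w / (∑' u : {u : List T // u ∈ G.lang ∧ u.length = n}, lw u.1)
          = (w.map π).prod /
            (∑' u : {u : List T // u ∈ G.lang ∧ u.length = n}, ((u.1.map π).prod)) := by
  refine ⟨N, G, rwt π, fun w => (w.map π).prod, hU, ?_, rfl, ?_, ?_⟩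
  · intro r _
    apply List.prod_pos
    intro x hx
    simp only [List.mem_map] at hx
    obtain ⟨s, _, rfl⟩ := hx
    cases s with
    | inl t => exact hπ t
    | inr B => exact one_pos
  · intro w p _ hs hy
    have := weight_rwt π p
    rw [hy] at this
    show _ = (List.map π w).prod
    rw [← this]
    simp [lf, hs]
  · intro n w _ _
    rfl

end WCFG
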